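/- Let p be a positive natural number, E := EuclideanSpace ℝ (Fin p), and let (Ω, 𝒜, μ) be a probability space with a filtration (ℱ_k)_{k∈ℕ}. Let L, σ > 0 and ζ ≥ 0, and let f : E → ℝ be differentiable with L-Lipschitz gradient and bounded below by f* ∈ ℝ. Fix a constant stepsize 0 < α ≤ 1/L. Suppose random sequences θ_k, r_k, b_k : Ω → E satisfy: θ_0 deterministic; θ_{k+1} = θ_k − α • (∇f(θ_k) + b_k + r_k); θ_k and b_k are ℱ_k-measurable; r_k is ℱ_{k+1}-measurable, integrable with square-integrable norm; E[r_k | ℱ_k] = 0 a.s.; E[‖r_k‖² | ℱ_k] ≤ σ² a.s.; ‖b_k‖² ≤ ζ² a.s.; and each θ_k has square-integrable norm with f(θ_k) integrable. Then for every K ≥ 1: (1/K)·Σ_{k=0}^{K−1} E[‖∇f(θ_k)‖²] ≤ 2·(f(θ_0) − f*)/(K·α) + α·L·σ² + ζ². -/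

import Mathlib

open MeasureTheory

section Helpers

lemma abs_coord_le_norm {p : ℕ} (x : EuclideanSpace ℝ (Fin p)) (i : Fin p) :
    |x i| ≤ ‖x‖ := by
  rw [EuclideanSpace.norm_eq, ← Real.sqrt_sq_eq_abs]
  apply Real.sqrt_le_sqrt
  have := Finset.single_le_sum (f := fun j => ‖x j‖ ^ 2)
    (fun j _ => sq_nonneg _) (Finset.mem_univ i)
  simpa [Real.norm_eq_abs, sq_abs] using this

lemma descent_lemma {E : Type*} [NormedAddCommGroup E] [InnerProductSpace ℝ E]
    [CompleteSpace E] {f : E → ℝ} {L : ℝ}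
    (hf : Differentiable ℝ f)
    (hLip : ∀ x y, ‖gradient f x - gradient f y‖ ≤ L * ‖x - y‖)
    (x y : E) :
    f y ≤ f x + (inner ℝ (gradient f x) (y - x) : ℝ) + L / 2 * ‖y - x‖ ^ 2 := by
  set v := y - x with hv
  have key : ∀ t : ℝ, HasDerivAt (fun t : ℝ => f (x + t • v))
      (inner ℝ (gradient f (x + t • v)) v : ℝ) t := by
    intro t
    have h1 : HasDerivAt (fun t : ℝ => x + t • v) v t := by
      simpa using ((hasDerivAt_id t).smul_const v).const_add x
    have h2 := (hf (x + t • v)).hasGradientAt.hasFDerivAt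
    have h3 := h2.comp_hasDerivAt t h1
    exact h3.congr_deriv (by simp [InnerProductSpace.toDual_apply_apply])
  set c1 : ℝ := inner ℝ (gradient f x) v with hc1
  set c2 : ℝ := L / 2 * ‖v‖ ^ 2 with hc2
  set φ : ℝ → ℝ := fun t => f (x + t • v) - t * c1 - c2 * t ^ 2 with hφ
  have keyφ : ∀ t : ℝ, HasDerivAt φ
      ((inner ℝ (gradient f (x + t • v)) v : ℝ) - c1 - c2 * (2 * t)) t := by
    intro t
    have := ((key t).sub (hasDerivAt_mul_const c1)).sub
      ((hasDerivAt_pow 2 t).const_mul c2)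
    exact this.congr_deriv (by simp)
  have hanti : AntitoneOn φ (Set.Icc 0 1) := by
    apply antitoneOn_of_deriv_nonpos (convex_Icc (0:ℝ) 1)
    · exact fun t _ => ((keyφ t).continuousAt).continuousWithinAt
    · exact fun t _ => ((keyφ t).differentiableAt).differentiableWithinAt
    · intro t ht
      rw [(keyφ t).deriv]
      rw [interior_Icc] at ht
      have hcs : (inner ℝ (gradient f (x + t • v)) v : ℝ)
          - (inner ℝ (gradient f x) v : ℝ) ≤ L * t * ‖v‖ ^ 2 := by
        have h1 : (inner ℝ (gradient f (x + t • v)) v : ℝ) - inner ℝ (gradient f x) v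
            = inner ℝ (gradient f (x + t • v) - gradient f x) v := by
          rw [inner_sub_left]
        rw [h1]
        calc (inner ℝ (gradient f (x + t • v) - gradient f x) v : ℝ)
            ≤ ‖gradient f (x + t • v) - gradient f x‖ * ‖v‖ := real_inner_le_norm _ _
          _ ≤ (L * ‖x + t • v - x‖) * ‖v‖ :=
              mul_le_mul_of_nonneg_right (hLip _ _) (norm_nonneg v)
          _ = L * t * ‖v‖ ^ 2 := by
              simp [norm_smul, abs_of_pos ht.1]; ring
      have h2 : c2 * (2 * t) = L * t * ‖v‖ ^ 2 := by rw [hc2]; ring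
      rw [h2, hc1]
      linarith
  have h01 := hanti (Set.mem_Icc.2 ⟨le_refl 0, zero_le_one⟩)
    (Set.mem_Icc.2 ⟨zero_le_one, le_refl 1⟩) zero_le_one
  have e0 : φ 0 = f x := by simp [hφ]
  have e1 : φ 1 = f y - c1 - c2 := by simp [hφ, hv]
  rw [e0, e1] at h01
  rw [hc1, hc2] at h01
  linarith

lemma integrable_inner_of_sq {p : ℕ} {Ω : Type*} {mΩ : MeasurableSpace Ω}
    {μ : Measure Ω} (v w : Ω → EuclideanSpace ℝ (Fin p))
    (hv : AEStronglyMeasurable v μ) (hw : AEStronglyMeasurable w μ)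
    (hv2 : Integrable (fun ω => ‖v ω‖ ^ 2) μ)
    (hw2 : Integrable (fun ω => ‖w ω‖ ^ 2) μ) :
    Integrable (fun ω => (inner ℝ (v ω) (w ω) : ℝ)) μ := by
  refine Integrable.mono' (μ := μ)
    (g := fun ω => (‖v ω‖ ^ 2 + ‖w ω‖ ^ 2) / 2) ((hv2.add hw2).div_const 2)
    (hv.inner hw) ?_
  refine Filter.Eventually.of_forall fun ω => ?_
  have h1 := abs_real_inner_le_norm (v ω) (w ω)
  have h2 : ‖(inner ℝ (v ω) (w ω) : ℝ)‖ = |(inner ℝ (v ω) (w ω) : ℝ)| := rfl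
  rw [h2]
  nlinarith [sq_nonneg (‖v ω‖ - ‖w ω‖), norm_nonneg (v ω), norm_nonneg (w ω)]

lemma cross_zero {p : ℕ} {Ω : Type*} {mΩ : MeasurableSpace Ω} {μ : Measure Ω}
    [IsProbabilityMeasure μ] (ℱ : Filtration ℕ mΩ) (k : ℕ)
    (r v : Ω → EuclideanSpace ℝ (Fin p))
    (hrint : Integrable r μ) (hrsq : Integrable (fun ω => ‖r ω‖ ^ 2) μ)
    (hrcond : μ[r|ℱ k] =ᵐ[μ] 0)
    (hvm : StronglyMeasurable[ℱ k] v)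
    (hv2 : Integrable (fun ω => ‖v ω‖ ^ 2) μ) :
    ∫ ω, (inner ℝ (v ω) (r ω) : ℝ) ∂μ = 0 := by
  have hm : (ℱ k : MeasurableSpace Ω) ≤ mΩ := ℱ.le k
  haveI : SigmaFinite (μ.trim hm) := by infer_instance
  have hvae : AEStronglyMeasurable v μ := (hvm.mono hm).aestronglyMeasurable
  have hri0 : ∀ i : Fin p, μ[fun ω => r ω i|ℱ k] =ᵐ[μ] 0 := by
    intro i
    have hint_i : Integrable (fun ω => r ω i) μ := by
      have := (EuclideanSpace.proj (𝕜 := ℝ) i).integrable_comp hrint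
      simpa using this
    symm
    refine ae_eq_condExp_of_forall_setIntegral_eq hm hint_i
      (fun s _ _ => (integrable_const (0:ℝ)).integrableOn) ?_ ?_
    · intro s hs hμs
      have hrs : ∫ ω in s, r ω ∂μ = 0 := by
        rw [← setIntegral_condExp hm hrint hs]
        calc ∫ ω in s, (μ[r|ℱ k]) ω ∂μ = ∫ ω in s, (0 : EuclideanSpace ℝ (Fin p)) ∂μ :=
              integral_congr_ae (ae_restrict_of_ae (by filter_upwards [hrcond] with ω h using h))
          _ = 0 := by simp
      have hco : ∫ ω in s, r ω i ∂μ = (∫ ω in s, r ω ∂μ) i := by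
        have := ContinuousLinearMap.integral_comp_comm (EuclideanSpace.proj (𝕜 := ℝ) i)
          (μ := μ.restrict s) (hrint.integrableOn (s := s))
        simpa using this
      simp [hco, hrs]
    · exact aestronglyMeasurable_const
  have hinner : ∀ ω, (inner ℝ (v ω) (r ω) : ℝ) = ∑ i : Fin p, v ω i * r ω i := by
    intro ω
    simp [PiLp.inner_apply, RCLike.inner_apply, conj_trivial, mul_comm]
  have hprod_int : ∀ i : Fin p, Integrable (fun ω => v ω i * r ω i) μ := by
    intro i
    refine Integrable.mono' (μ := μ)
      (g := fun ω => (‖v ω‖ ^ 2 + ‖r ω‖ ^ 2) / 2) ((hv2.add hrsq).div_const 2) ?_ ?_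
    · have h1 : AEStronglyMeasurable (fun ω => v ω i) μ := by
        have := (EuclideanSpace.proj (𝕜 := ℝ) i).continuous.comp_aestronglyMeasurable hvae
        simpa using this
      have h2 : AEStronglyMeasurable (fun ω => r ω i) μ := by
        have := (EuclideanSpace.proj (𝕜 := ℝ) i).continuous.comp_aestronglyMeasurable
          hrint.aestronglyMeasurable
        simpa using this
      exact h1.mul h2
    · refine Filter.Eventually.of_forall fun ω => ?_
      have h1 : |v ω i| ≤ ‖v ω‖ := abs_coord_le_norm (v ω) i
      have h2 : |r ω i| ≤ ‖r ω‖ := abs_coord_le_norm (r ω) i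
      have he : ‖v ω i * r ω i‖ = |v ω i| * |r ω i| := abs_mul _ _
      rw [he]
      have h3 := mul_le_mul h1 h2 (abs_nonneg _) (norm_nonneg _)
      nlinarith [sq_nonneg (‖v ω‖ - ‖r ω‖)]
  have hsum : ∫ ω, (inner ℝ (v ω) (r ω) : ℝ) ∂μ = ∑ i : Fin p, ∫ ω, v ω i * r ω i ∂μ := by
    simp_rw [hinner]
    exact integral_finset_sum _ fun i _ => hprod_int i
  rw [hsum]
  refine Finset.sum_eq_zero fun i _ => ?_
  have hvi : StronglyMeasurable[ℱ k] (fun ω => v ω i) := by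
    have := (EuclideanSpace.proj (𝕜 := ℝ) i).continuous.comp_stronglyMeasurable hvm
    simpa using this
  have hri_int : Integrable (fun ω => r ω i) μ := by
    have := (EuclideanSpace.proj (𝕜 := ℝ) i).integrable_comp hrint
    simpa using this
  have hpull := condExp_mul_of_stronglyMeasurable_left (μ := μ) (m := ℱ k) hvi
    (by exact hprod_int i) hri_int
  have hzero : μ[(fun ω => v ω i) * fun ω => r ω i|ℱ k] =ᵐ[μ] 0 := by
    refine hpull.trans ?_
    filter_upwards [hri0 i] with ω h
    have he : ((fun ω => v ω i) * μ[fun ω => r ω i|ℱ k]) ω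
        = v ω i * (μ[fun ω => r ω i|ℱ k]) ω := rfl
    rw [he, h]
    simp
  calc ∫ ω, v ω i * r ω i ∂μ
      = ∫ ω, ((fun ω => v ω i) * fun ω => r ω i) ω ∂μ := rfl
    _ = ∫ ω, (μ[(fun ω => v ω i) * fun ω => r ω i|ℱ k]) ω ∂μ :=
        (integral_condExp hm).symm
    _ = 0 := by
        rw [integral_congr_ae hzero]; simp

end Helpers

set_option maxHeartbeats 2000000 in
/-- biased-SGD convergence bound applied to the parameter-shift rule under
biased circuit evaluations. With constant stepsize `0 < α ≤ 1/L`, conditionally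
mean-zero noise `r_k` of conditional variance at most `σ²` and systematic bias `b_k`
with `‖b_k‖² ≤ ζ²` a.s.,
`(1/K)·Σ_{k<K} E‖∇f(θ_k)‖² ≤ 2(f(θ_0) − f*)/(Kα) + αLσ² + ζ²`. -/
theorem parameter_shift_biased_sgd_bound
    (p : ℕ) (hp : 0 < p)
    {Ω : Type*} {mΩ : MeasurableSpace Ω} {μ : Measure Ω} [IsProbabilityMeasure μ]
    (ℱ : Filtration ℕ mΩ)
    (L σ ζ : ℝ) (hL : 0 < L) (hσ : 0 < σ) (hζ : 0 ≤ ζ)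
    (f : EuclideanSpace ℝ (Fin p) → ℝ) (fstar : ℝ)
    (hf : Differentiable ℝ f)
    (hLip : ∀ x y, ‖gradient f x - gradient f y‖ ≤ L * ‖x - y‖)
    (hflb : ∀ x, fstar ≤ f x)
    (α : ℝ) (hα : 0 < α) (hαL : α ≤ 1 / L)
    (θ r bk : ℕ → Ω → EuclideanSpace ℝ (Fin p))
    (θ0 : EuclideanSpace ℝ (Fin p)) (hθ0 : ∀ ω, θ 0 ω = θ0)
    (hrec : ∀ k ω, θ (k + 1) ω = θ k ω
      - α • (gradient f (θ k ω) + bk k ω + r k ω))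
    (hθmeas : ∀ k, StronglyMeasurable[ℱ k] (θ k))
    (hbmeas : ∀ k, StronglyMeasurable[ℱ k] (bk k))
    (hrmeas : ∀ k, StronglyMeasurable[ℱ (k + 1)] (r k))
    (hrint : ∀ k, Integrable (r k) μ)
    (hrsq : ∀ k, Integrable (fun ω => ‖r k ω‖ ^ 2) μ)
    (hrcond : ∀ k, μ[r k|ℱ k] =ᵐ[μ] 0)
    (hrvar : ∀ k, ∀ᵐ ω ∂μ, (μ[fun ω' => ‖r k ω'‖ ^ 2|ℱ k]) ω ≤ σ ^ 2)
    (hbbd : ∀ k, ∀ᵐ ω ∂μ, ‖bk k ω‖ ^ 2 ≤ ζ ^ 2)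
    (hθsq : ∀ k, Integrable (fun ω => ‖θ k ω‖ ^ 2) μ)
    (hfint : ∀ k, Integrable (fun ω => f (θ k ω)) μ)
    (K : ℕ) (hK : 1 ≤ K) :
    (1 / (K : ℝ)) * ∑ k ∈ Finset.range K, ∫ ω, ‖gradient f (θ k ω)‖ ^ 2 ∂μ
      ≤ 2 * (f θ0 - fstar) / ((K : ℝ) * α) + α * L * σ ^ 2 + ζ ^ 2 := by
  have hαL1 : α * L ≤ 1 := by
    have := mul_le_mul_of_nonneg_right hαL hL.le
    rwa [one_div, inv_mul_cancel₀ hL.ne'] at this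
  -- Lipschitz continuity of the gradient
  have hgradLip : LipschitzWith (Real.toNNReal L) (gradient f) := by
    apply LipschitzWith.of_dist_le_mul
    intro x y
    rw [dist_eq_norm, dist_eq_norm]
    simpa [Real.coe_toNNReal L hL.le] using hLip x y
  have hGm : ∀ k, StronglyMeasurable[ℱ k] (fun ω => gradient f (θ k ω)) :=
    fun k => hgradLip.continuous.comp_stronglyMeasurable (hθmeas k)
  have hGae : ∀ k, AEStronglyMeasurable (fun ω => gradient f (θ k ω)) μ :=
    fun k => ((hGm k).mono (ℱ.le k)).aestronglyMeasurable
  have hbae : ∀ k, AEStronglyMeasurable (bk k) μ :=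
    fun k => ((hbmeas k).mono (ℱ.le k)).aestronglyMeasurable
  -- square integrability of the gradient sequence
  have hG2 : ∀ k, Integrable (fun ω => ‖gradient f (θ k ω)‖ ^ 2) μ := by
    intro k
    refine Integrable.mono' (μ := μ)
      (g := fun ω => 2 * ‖gradient f 0‖ ^ 2 + 2 * L ^ 2 * ‖θ k ω‖ ^ 2)
      ((integrable_const _).add ((hθsq k).const_mul _)) ?_ ?_
    · have h := (hGae k).norm
      have : AEStronglyMeasurable (fun ω => ‖gradient f (θ k ω)‖ * ‖gradient f (θ k ω)‖) μ :=
        h.mul h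
      simpa [pow_two] using this
    · refine Filter.Eventually.of_forall fun ω => ?_
      show ‖(‖gradient f (θ k ω)‖ ^ 2 : ℝ)‖ ≤ 2 * ‖gradient f 0‖ ^ 2 + 2 * L ^ 2 * ‖θ k ω‖ ^ 2
      have h1 : ‖gradient f (θ k ω) - gradient f 0‖ ≤ L * ‖θ k ω‖ := by
        simpa using hLip (θ k ω) 0
      have h2 : ‖gradient f (θ k ω)‖ ≤ ‖gradient f (θ k ω) - gradient f 0‖ + ‖gradient f 0‖ := by
        simpa using norm_add_le (gradient f (θ k ω) - gradient f 0) (gradient f 0)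
      have h3 : ‖(‖gradient f (θ k ω)‖ ^ 2 : ℝ)‖ = ‖gradient f (θ k ω)‖ ^ 2 := by
        rw [Real.norm_eq_abs, abs_of_nonneg (sq_nonneg _)]
      rw [h3]
      have h4 : ‖gradient f (θ k ω)‖ ≤ L * ‖θ k ω‖ + ‖gradient f 0‖ := by linarith
      nlinarith [h4, norm_nonneg (gradient f (θ k ω)),
        sq_nonneg (L * ‖θ k ω‖ - ‖gradient f 0‖),
        mul_nonneg hL.le (norm_nonneg (θ k ω)), norm_nonneg (gradient f 0)]
  -- square integrability of the bias
  have hb2 : ∀ k, Integrable (fun ω => ‖bk k ω‖ ^ 2) μ := by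
    intro k
    refine Integrable.mono' (μ := μ) (g := fun _ => ζ ^ 2) (integrable_const _) ?_ ?_
    · have h := (hbae k).norm
      have : AEStronglyMeasurable (fun ω => ‖bk k ω‖ * ‖bk k ω‖) μ := h.mul h
      simpa [pow_two] using this
    · filter_upwards [hbbd k] with ω h
      rwa [Real.norm_eq_abs, abs_of_nonneg (sq_nonneg _)]
  -- square integrability of u = gradient + bias
  have hu2 : ∀ k, Integrable (fun ω => ‖gradient f (θ k ω) + bk k ω‖ ^ 2) μ := by
    intro k
    refine Integrable.mono' (μ := μ)
      (g := fun ω => 2 * ‖gradient f (θ k ω)‖ ^ 2 + 2 * ‖bk k ω‖ ^ 2)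
      (((hG2 k).const_mul 2).add ((hb2 k).const_mul 2)) ?_ ?_
    · have h := ((hGae k).add (hbae k)).norm
      have : AEStronglyMeasurable
          (fun ω => ‖gradient f (θ k ω) + bk k ω‖ * ‖gradient f (θ k ω) + bk k ω‖) μ := h.mul h
      simpa [pow_two] using this
    · refine Filter.Eventually.of_forall fun ω => ?_
      show ‖(‖gradient f (θ k ω) + bk k ω‖ ^ 2 : ℝ)‖
          ≤ 2 * ‖gradient f (θ k ω)‖ ^ 2 + 2 * ‖bk k ω‖ ^ 2
      have h1 := norm_add_le (gradient f (θ k ω)) (bk k ω)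
      have h3 : ‖(‖gradient f (θ k ω) + bk k ω‖ ^ 2 : ℝ)‖
          = ‖gradient f (θ k ω) + bk k ω‖ ^ 2 := by
        rw [Real.norm_eq_abs, abs_of_nonneg (sq_nonneg _)]
      rw [h3]
      nlinarith [norm_nonneg (gradient f (θ k ω) + bk k ω), norm_nonneg (gradient f (θ k ω)),
        norm_nonneg (bk k ω), sq_nonneg (‖gradient f (θ k ω)‖ - ‖bk k ω‖)]
  -- variance bound
  have hr2le : ∀ k, ∫ ω, ‖r k ω‖ ^ 2 ∂μ ≤ σ ^ 2 := by
    intro k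
    have h1 : ∫ ω, ‖r k ω‖ ^ 2 ∂μ = ∫ ω, (μ[fun ω' => ‖r k ω'‖ ^ 2|ℱ k]) ω ∂μ :=
      (integral_condExp (ℱ.le k)).symm
    have h2 : ∫ ω, (μ[fun ω' => ‖r k ω'‖ ^ 2|ℱ k]) ω ∂μ ≤ ∫ _ω, σ ^ 2 ∂μ :=
      integral_mono_ae integrable_condExp (integrable_const _) (hrvar k)
    rw [h1]
    simpa using h2
  -- per-step descent inequality in expectation
  have step : ∀ k, ∫ ω, f (θ (k + 1) ω) ∂μ
      ≤ ∫ ω, f (θ k ω) ∂μ - α / 2 * ∫ ω, ‖gradient f (θ k ω)‖ ^ 2 ∂μ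
        + (α / 2 * ζ ^ 2 + L * α ^ 2 / 2 * σ ^ 2) := by
    intro k
    have hGr0 : ∫ ω, (inner ℝ (gradient f (θ k ω)) (r k ω) : ℝ) ∂μ = 0 :=
      cross_zero ℱ k (r k) _ (hrint k) (hrsq k) (hrcond k) (hGm k) (hG2 k)
    have hur0 : ∫ ω, (inner ℝ (gradient f (θ k ω) + bk k ω) (r k ω) : ℝ) ∂μ = 0 :=
      cross_zero ℱ k (r k) _ (hrint k) (hrsq k) (hrcond k) ((hGm k).add (hbmeas k)) (hu2 k)
    have hGr_int : Integrable (fun ω => (inner ℝ (gradient f (θ k ω)) (r k ω) : ℝ)) μ :=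
      integrable_inner_of_sq _ _ (hGae k) (hrint k).aestronglyMeasurable (hG2 k) (hrsq k)
    have hur_int : Integrable
        (fun ω => (inner ℝ (gradient f (θ k ω) + bk k ω) (r k ω) : ℝ)) μ :=
      integrable_inner_of_sq _ _ ((hGae k).add (hbae k)) (hrint k).aestronglyMeasurable
        (hu2 k) (hrsq k)
    -- pointwise a.e. inequality
    have hpt : ∀ᵐ ω ∂μ, f (θ (k + 1) ω)
        ≤ f (θ k ω) + -(α / 2) * ‖gradient f (θ k ω)‖ ^ 2 + α / 2 * ζ ^ 2
          + -α * (inner ℝ (gradient f (θ k ω)) (r k ω) : ℝ)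
          + L * α ^ 2 * (inner ℝ (gradient f (θ k ω) + bk k ω) (r k ω) : ℝ)
          + L * α ^ 2 / 2 * ‖r k ω‖ ^ 2 := by
      filter_upwards [hbbd k] with ω hbω
      have hd := descent_lemma hf hLip (θ k ω) (θ (k + 1) ω)
      set G := gradient f (θ k ω) with hG
      set b := bk k ω with hb
      set rr := r k ω with hrr
      set u : EuclideanSpace ℝ (Fin p) := G + b with hu
      have hyx : θ (k + 1) ω - θ k ω = -(α • (u + rr)) := by
        rw [hrec k ω, hu]
        abel
      rw [hyx] at hd
      have e_inner : (inner ℝ G (-(α • (u + rr))) : ℝ)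
          = -(α * ((inner ℝ G u : ℝ) + (inner ℝ G rr : ℝ))) := by
        rw [inner_neg_right, real_inner_smul_right, inner_add_right]
      have e_norm : ‖-(α • (u + rr))‖ ^ 2
          = α ^ 2 * (‖u‖ ^ 2 + 2 * (inner ℝ u rr : ℝ) + ‖rr‖ ^ 2) := by
        rw [norm_neg, norm_smul, mul_pow, ← norm_add_sq_real]
        simp [abs_of_pos hα]
      have hGu : (inner ℝ G u : ℝ) = (‖u‖ ^ 2 + ‖G‖ ^ 2 - ‖b‖ ^ 2) / 2 := by
        have h1 : ‖u - G‖ ^ 2 = ‖u‖ ^ 2 - 2 * (inner ℝ u G : ℝ) + ‖G‖ ^ 2 :=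
          norm_sub_sq_real u G
        have h2 : u - G = b := by rw [hu]; abel
        have h3 : (inner ℝ u G : ℝ) = inner ℝ G u := real_inner_comm _ _
        rw [h2, h3] at h1
        linarith
      rw [e_inner, e_norm] at hd
      have P1 : 0 ≤ α * (1 - α * L) * ‖u‖ ^ 2 :=
        mul_nonneg (mul_nonneg hα.le (by linarith)) (sq_nonneg _)
      have P2 : 0 ≤ α * (ζ ^ 2 - ‖b‖ ^ 2) := mul_nonneg hα.le (by linarith)
      nlinarith [hd, hGu]
    -- integrability of the right-hand side, grouped as in hpt
    have I1 : Integrable (fun ω => f (θ k ω)) μ := hfint k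
    have I2 : Integrable (fun ω => -(α / 2) * ‖gradient f (θ k ω)‖ ^ 2) μ :=
      (hG2 k).const_mul _
    have I12 : Integrable (fun ω => f (θ k ω)
        + -(α / 2) * ‖gradient f (θ k ω)‖ ^ 2) μ := I1.add I2
    have I123 : Integrable (fun ω => f (θ k ω)
        + -(α / 2) * ‖gradient f (θ k ω)‖ ^ 2 + α / 2 * ζ ^ 2) μ :=
      I12.add (integrable_const _)
    have I4 : Integrable (fun ω => -α * (inner ℝ (gradient f (θ k ω)) (r k ω) : ℝ)) μ :=
      hGr_int.const_mul _
    have I1234 : Integrable (fun ω => f (θ k ω)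
        + -(α / 2) * ‖gradient f (θ k ω)‖ ^ 2 + α / 2 * ζ ^ 2
        + -α * (inner ℝ (gradient f (θ k ω)) (r k ω) : ℝ)) μ := I123.add I4
    have I5 : Integrable
        (fun ω => L * α ^ 2 * (inner ℝ (gradient f (θ k ω) + bk k ω) (r k ω) : ℝ)) μ :=
      hur_int.const_mul _
    have I12345 : Integrable (fun ω => f (θ k ω)
        + -(α / 2) * ‖gradient f (θ k ω)‖ ^ 2 + α / 2 * ζ ^ 2
        + -α * (inner ℝ (gradient f (θ k ω)) (r k ω) : ℝ)
        + L * α ^ 2 * (inner ℝ (gradient f (θ k ω) + bk k ω) (r k ω) : ℝ)) μ := I1234.add I5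
    have I6 : Integrable (fun ω => L * α ^ 2 / 2 * ‖r k ω‖ ^ 2) μ := (hrsq k).const_mul _
    have I123456 : Integrable (fun ω => f (θ k ω)
        + -(α / 2) * ‖gradient f (θ k ω)‖ ^ 2 + α / 2 * ζ ^ 2
        + -α * (inner ℝ (gradient f (θ k ω)) (r k ω) : ℝ)
        + L * α ^ 2 * (inner ℝ (gradient f (θ k ω) + bk k ω) (r k ω) : ℝ)
        + L * α ^ 2 / 2 * ‖r k ω‖ ^ 2) μ := I12345.add I6
    have hmono := integral_mono_ae (hfint (k + 1)) I123456 hpt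
    have hsplit : ∫ ω, (f (θ k ω) + -(α / 2) * ‖gradient f (θ k ω)‖ ^ 2 + α / 2 * ζ ^ 2
          + -α * (inner ℝ (gradient f (θ k ω)) (r k ω) : ℝ)
          + L * α ^ 2 * (inner ℝ (gradient f (θ k ω) + bk k ω) (r k ω) : ℝ)
          + L * α ^ 2 / 2 * ‖r k ω‖ ^ 2) ∂μ
        = ∫ ω, f (θ k ω) ∂μ + -(α / 2) * ∫ ω, ‖gradient f (θ k ω)‖ ^ 2 ∂μ + α / 2 * ζ ^ 2
          + -α * ∫ ω, (inner ℝ (gradient f (θ k ω)) (r k ω) : ℝ) ∂μ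
          + L * α ^ 2 * ∫ ω, (inner ℝ (gradient f (θ k ω) + bk k ω) (r k ω) : ℝ) ∂μ
          + L * α ^ 2 / 2 * ∫ ω, ‖r k ω‖ ^ 2 ∂μ := by
      rw [integral_add I12345 I6, integral_add I1234 I5, integral_add I123 I4,
        integral_add I12 (integrable_const _), integral_add I1 I2,
        integral_const_mul, integral_const_mul, integral_const_mul, integral_const_mul, integral_const_mul,
        integral_const]
      simp [measure_univ]
    rw [hsplit, hGr0, hur0] at hmono
    have h6 : L * α ^ 2 / 2 * ∫ ω, ‖r k ω‖ ^ 2 ∂μ ≤ L * α ^ 2 / 2 * σ ^ 2 :=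
      mul_le_mul_of_nonneg_left (hr2le k) (by positivity)
    linarith
  -- telescoping
  set S : ℝ := ∑ k ∈ Finset.range K, ∫ ω, ‖gradient f (θ k ω)‖ ^ 2 ∂μ with hS
  set C : ℝ := α / 2 * ζ ^ 2 + L * α ^ 2 / 2 * σ ^ 2 with hC
  have htel : α / 2 * S ≤ (∫ ω, f (θ 0 ω) ∂μ) - (∫ ω, f (θ K ω) ∂μ) + K * C := by
    have h1 : ∀ k ∈ Finset.range K, α / 2 * ∫ ω, ‖gradient f (θ k ω)‖ ^ 2 ∂μ
        ≤ ((∫ ω, f (θ k ω) ∂μ) - (∫ ω, f (θ (k + 1) ω) ∂μ)) + C := by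
      intro k _
      have := step k
      rw [hC]
      linarith
    have h2 := Finset.sum_le_sum h1
    rw [Finset.sum_add_distrib, Finset.sum_range_sub' (fun k => ∫ ω, f (θ k ω) ∂μ) K,
      Finset.sum_const, Finset.card_range] at h2
    rw [hS, Finset.mul_sum]
    simpa [nsmul_eq_mul] using h2
  have hf0 : ∫ ω, f (θ 0 ω) ∂μ = f θ0 := by
    simp [hθ0]
  have hfK : fstar ≤ ∫ ω, f (θ K ω) ∂μ := by
    have := integral_mono (integrable_const fstar) (hfint K)
      (fun ω => hflb (θ K ω))
    simpa using this
  have hKr : (0:ℝ) < (K:ℝ) := by exact_mod_cast hK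
  set D : ℝ := f θ0 - fstar with hD
  have h2 : α * S ≤ 2 * D + (K:ℝ) * α * ζ ^ 2 + (K:ℝ) * α ^ 2 * L * σ ^ 2 := by
    rw [hf0] at htel
    rw [hC] at htel
    nlinarith [htel, hfK]
  have h3 : ((K:ℝ) * α) * (1 / (K:ℝ) * S)
      ≤ ((K:ℝ) * α) * (2 * D / ((K:ℝ) * α) + α * L * σ ^ 2 + ζ ^ 2) := by
    calc ((K:ℝ) * α) * (1 / (K:ℝ) * S) = α * S := by
          field_simp
        _ ≤ 2 * D + (K:ℝ) * α * ζ ^ 2 + (K:ℝ) * α ^ 2 * L * σ ^ 2 := h2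
        _ = ((K:ℝ) * α) * (2 * D / ((K:ℝ) * α) + α * L * σ ^ 2 + ζ ^ 2) := by
          field_simp
          ring
  have := le_of_mul_le_mul_left h3 (by positivity)
  simpa [hD] using this
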